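/- Let ν ∈ (0,1) and set p = 1/ν. For every real x > 1, Σ_{k≥0} x^k / Γ(kν + 1) ≥ x^{−p} · (e^{x^p} − 1). -/

import Mathlib

/-- Let `ν ∈ (0,1)`, `p = 1/ν`.  For every real `x > 1`,
`Σ_{k≥0} x^k / Γ(kν + 1) ≥ x^(−p) · (e^(x^p) − 1)`. -/
theorem series_lower_bound (nu : ℝ) (hnu : nu ∈ Set.Ioo (0 : ℝ) 1)
    (x : ℝ) (hx : 1 < x) :
    x ^ (-(1 / nu)) * (Real.exp (x ^ (1 / nu)) - 1)
      ≤ ∑' k : ℕ, x ^ k / Real.Gamma ((k : ℝ) * nu + 1) := by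
  obtain ⟨hnu0, hnu1⟩ := hnu
  have hx0 : (0 : ℝ) < x := lt_trans one_pos hx
  set p : ℝ := 1 / nu with hp
  have hp1 : 1 < p := one_lt_one_div hnu0 hnu1
  have hp0 : 0 < p := lt_trans one_pos hp1
  have hpn : p * nu = 1 := by rw [hp]; field_simp
  set y : ℝ := x ^ p with hy
  have hy1 : 1 < y := (Real.one_lt_rpow_iff_of_pos hx0).2 (Or.inl ⟨hx, hp0⟩)
  have hy0 : 0 < y := lt_trans one_pos hy1
  set f : ℕ → ℝ := fun k => x ^ k / Real.Gamma ((k : ℝ) * nu + 1) with hf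
  set g : ℕ → ℝ := fun m => y ^ m / (Nat.factorial (m + 1)) with hg
  have hGpos : ∀ k : ℕ, 0 < Real.Gamma ((k : ℝ) * nu + 1) := by
    intro k
    apply Real.Gamma_pos_of_pos
    positivity
  have hfnn : ∀ k, 0 ≤ f k := fun k => div_nonneg (by positivity) (hGpos k).le
  -- Summability of f
  have hfs : Summable f := by
    set R : ℝ := (2 * x) ^ p with hR
    have h2x : (1 : ℝ) < 2 * x := by linarith
    have h2x0 : (0 : ℝ) < 2 * x := by linarith
    have hR1 : 1 < R := (Real.one_lt_rpow_iff_of_pos h2x0).2 (Or.inl ⟨h2x, hp0⟩)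
    have hR0 : 0 < R := lt_trans one_pos hR1
    set k0 : ℕ := ⌈p⌉₊ with hk0
    rw [← summable_nat_add_iff k0]
    have key : ∀ n : ℕ, f (n + k0) ≤ (R * Real.exp R) * (1 / 2) ^ n := by
      intro n
      set k : ℕ := n + k0 with hk
      have hk1 : 1 ≤ (k : ℝ) * nu := by
        have h1 : p ≤ (k0 : ℝ) := Nat.le_ceil p
        have h2 : (k0 : ℝ) ≤ (k : ℝ) := by exact_mod_cast Nat.le_add_left k0 n
        calc (1 : ℝ) = p * nu := hpn.symm
          _ ≤ (k : ℝ) * nu := by nlinarith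
      have hknn : (0 : ℝ) ≤ (k : ℝ) * nu := by linarith
      set m : ℕ := ⌊(k : ℝ) * nu⌋₊ with hm
      have hm1 : 1 ≤ m := by
        rw [hm, Nat.le_floor_iff hknn]; exact_mod_cast hk1
      -- Gamma lower bound
      have hG1 : (m.factorial : ℝ) ≤ Real.Gamma ((k : ℝ) * nu + 1) := by
        rw [← Real.Gamma_nat_eq_factorial]
        apply Real.Gamma_strictMonoOn_Ici.monotoneOn
        · simp only [Set.mem_Ici]
          have : (1 : ℝ) ≤ (m : ℝ) := by exact_mod_cast hm1
          linarith
        · simp only [Set.mem_Ici]; linarith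
        · have := Nat.floor_le hknn
          simpa [hm] using by linarith [this]
      have hfact : R ^ m / (m.factorial : ℝ) ≤ Real.exp R :=
        Real.pow_div_factorial_le_exp R hR0.le m
      have hfact' : R ^ m / Real.exp R ≤ (m.factorial : ℝ) := by
        have hm0 : (0 : ℝ) < (m.factorial : ℝ) := by positivity
        rw [div_le_iff₀ (Real.exp_pos R)]
        rw [div_le_iff₀ hm0] at hfact
        nlinarith
      have hRm : R ^ ((k : ℝ) * nu - 1) ≤ R ^ (m : ℝ) := by
        apply Real.rpow_le_rpow_left_iff hR1 |>.2
        have := Nat.sub_one_lt_floor ((k : ℝ) * nu)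
        linarith [this]
      have hRmpow : R ^ (m : ℝ) = R ^ m := Real.rpow_natCast R m
      -- R ^ (k*nu) = (2*x)^k
      have hRk : R ^ ((k : ℝ) * nu) = (2 * x) ^ k := by
        rw [hR, ← Real.rpow_mul h2x0.le]
        rw [show p * ((k : ℝ) * nu) = (k : ℝ) by
          rw [← mul_assoc, mul_comm p (k : ℝ), mul_assoc, hpn, mul_one]]
        exact Real.rpow_natCast _ k
      have hGlow : (2 * x) ^ k / (R * Real.exp R) ≤ Real.Gamma ((k : ℝ) * nu + 1) := by
        have h1 : R ^ ((k : ℝ) * nu - 1) = (2 * x) ^ k / R := by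
          rw [Real.rpow_sub hR0, hRk, Real.rpow_one]
        calc (2 * x) ^ k / (R * Real.exp R) = ((2 * x) ^ k / R) / Real.exp R := by
              rw [div_div]
          _ = R ^ ((k : ℝ) * nu - 1) / Real.exp R := by rw [h1]
          _ ≤ R ^ (m : ℝ) / Real.exp R := by gcongr
          _ = R ^ m / Real.exp R := by rw [hRmpow]
          _ ≤ (m.factorial : ℝ) := hfact'
          _ ≤ Real.Gamma ((k : ℝ) * nu + 1) := hG1
      have hdenpos : (0 : ℝ) < (2 * x) ^ k / (R * Real.exp R) := by positivity
      calc f k = x ^ k / Real.Gamma ((k : ℝ) * nu + 1) := rfl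
        _ ≤ x ^ k / ((2 * x) ^ k / (R * Real.exp R)) := by
            apply div_le_div_of_nonneg_left (by positivity) hdenpos hGlow
        _ = (R * Real.exp R) * (1 / 2) ^ k := by
            rw [div_div_eq_mul_div, mul_pow]
            have hxk : (0 : ℝ) < x ^ k := by positivity
            field_simp
            rw [← mul_pow]; norm_num
        _ ≤ (R * Real.exp R) * (1 / 2) ^ n := by
            have hnk : n ≤ k := by omega
            have h12 : (1 / 2 : ℝ) ^ k ≤ (1 / 2 : ℝ) ^ n :=
              pow_le_pow_of_le_one (by norm_num) (by norm_num) hnk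
            have hRe : (0 : ℝ) ≤ R * Real.exp R := by positivity
            nlinarith
    apply Summable.of_nonneg_of_le (fun n => hfnn (n + k0)) key
    exact (summable_geometric_of_lt_one (by norm_num) (by norm_num)).mul_left _
  -- Summability of g
  have hgs : Summable g := by
    apply Summable.of_nonneg_of_le (f := fun m => y ^ m / (Nat.factorial m : ℝ))
      (fun m => by positivity) (fun m => ?_) (Real.summable_pow_div_factorial y)
    apply div_le_div_of_nonneg_left (by positivity) (by positivity)
    exact_mod_cast Nat.factorial_le (Nat.le_succ m)
  -- the injection
  set i : ℕ → ℕ := fun m => ⌈p * m⌉₊ with hi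
  have hmono : StrictMono i := by
    apply strictMono_nat_of_lt_succ
    intro m
    rw [hi]
    simp only
    rw [Nat.lt_ceil]
    have h1 : (⌈p * m⌉₊ : ℝ) < p * m + 1 := Nat.ceil_lt_add_one (by positivity)
    have : p * m + 1 ≤ p * (m + 1) := by nlinarith
    calc (⌈p * m⌉₊ : ℝ) < p * m + 1 := h1
      _ ≤ p * (m + 1) := this
      _ = p * ((m : ℕ) + 1 : ℕ) := by push_cast; ring
  -- termwise bound
  have hterm : ∀ m : ℕ, g m ≤ f (i m) := by
    intro m
    have hle : p * m ≤ (i m : ℝ) := Nat.le_ceil _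
    have hlt : (i m : ℝ) < p * m + 1 := Nat.ceil_lt_add_one (by positivity)
    -- numerator
    have hnum : y ^ m ≤ x ^ (i m) := by
      rw [← Real.rpow_natCast y m, hy, ← Real.rpow_natCast x (i m),
        ← Real.rpow_mul hx0.le]
      exact Real.rpow_le_rpow_left_iff hx |>.2 hle
    -- denominator
    have hml : (m : ℝ) + 1 ≤ (i m : ℝ) * nu + 1 := by
      have : (m : ℝ) ≤ (i m : ℝ) * nu := by
        calc (m : ℝ) = p * m * nu := by rw [mul_comm p, mul_assoc, hpn, mul_one]
          _ ≤ (i m : ℝ) * nu := by nlinarith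
      linarith
    have hmu : (i m : ℝ) * nu + 1 ≤ (m : ℝ) + 2 := by
      have : (i m : ℝ) * nu ≤ (p * m + 1) * nu := by nlinarith
      have h2 : (p * m + 1) * nu = (m : ℝ) + nu := by
        rw [add_mul, mul_comm p, mul_assoc, hpn, mul_one, one_mul]
      nlinarith
    have hden : Real.Gamma ((i m : ℝ) * nu + 1) ≤ (Nat.factorial (m + 1) : ℝ) := by
      have hseg : (i m : ℝ) * nu + 1 ∈ segment ℝ ((m : ℝ) + 1) ((m : ℝ) + 2) := by
        rw [segment_eq_Icc (by linarith : (m : ℝ) + 1 ≤ (m : ℝ) + 2)]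
        exact ⟨hml, hmu⟩
      have := Real.convexOn_Gamma.le_on_segment
        (x := (m : ℝ) + 1) (y := (m : ℝ) + 2)
        (by simp only [Set.mem_Ioi]; positivity)
        (by simp only [Set.mem_Ioi]; positivity) hseg
      have e1 : Real.Gamma ((m : ℝ) + 1) = (Nat.factorial m : ℝ) :=
        Real.Gamma_nat_eq_factorial m
      have e2 : Real.Gamma ((m : ℝ) + 2) = (Nat.factorial (m + 1) : ℝ) := by
        have := Real.Gamma_nat_eq_factorial (m + 1)
        rw [← this]; push_cast; ring_nf
      rw [e1, e2] at this
      have hmax : max ((Nat.factorial m : ℝ)) ((Nat.factorial (m + 1) : ℝ))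
          = (Nat.factorial (m + 1) : ℝ) := by
        apply max_eq_right
        exact_mod_cast Nat.factorial_le (Nat.le_succ m)
      rw [hmax] at this
      exact this
    calc g m = y ^ m / (Nat.factorial (m + 1) : ℝ) := rfl
      _ ≤ x ^ (i m) / Real.Gamma ((i m : ℝ) * nu + 1) := by
          apply div_le_div₀ (by positivity) hnum (hGpos (i m)) hden
      _ = f (i m) := rfl
  -- LHS = tsum g
  have hexp : Real.exp y = ∑' n : ℕ, y ^ n / (Nat.factorial n) := by
    rw [Real.exp_eq_exp_ℝ, NormedSpace.exp_eq_tsum_div]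
  have hsume : Summable (fun n : ℕ => y ^ n / (Nat.factorial n : ℝ)) :=
    Real.summable_pow_div_factorial y
  have hshift : Real.exp y - 1 = ∑' n : ℕ, y ^ (n + 1) / (Nat.factorial (n + 1)) := by
    rw [hexp, Summable.tsum_eq_zero_add hsume]
    simp
  have hLHS : x ^ (-p) * (Real.exp y - 1) = ∑' m, g m := by
    rw [hshift, ← tsum_mul_left]
    congr 1
    ext n
    rw [Real.rpow_neg hx0.le, ← hy, hg]
    simp only
    rw [pow_succ]
    field_simp
  rw [hLHS]
  exact Summable.tsum_le_tsum_of_inj i hmono.injective (fun c _ => hfnn c) hterm hgs hfs
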